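/- Let B be a UFD of characteristic zero with an irreducible locally nilpotent derivation δ, A = Ker δ an affine k-domain, plinth ideal δ(B) ∩ A = α^p β A with α ∈ A prime coprime to β ∈ A, p > 0, and z ∈ B with δ(z) = α^p β. Let I₁ = A[z] ∩ αB, and let g(z) ∈ I₁ be a primitive polynomial over A whose image ḡ generates I₁ ⊗_A Frac(A/αA) in Frac(A/αA)[z̄]. Then deg_{z̄} ḡ(z̄) > 1. -/

import Mathlib

open Polynomial

section helpers
variable {k B : Type*} [Field k] [CharZero k] [CommRing B] [IsDomain B] [Algebra k B]

set_option linter.unusedSectionVars false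

/-- Restrict a `k`-derivation vanishing on a subalgebra `A` to an `A`-derivation. -/
def derA (δ : Derivation k B B) (A : Subalgebra k B) (h : ∀ a : A, δ (a : B) = 0) :
    Derivation A B B where
  toFun := δ
  map_add' := map_add δ
  map_smul' := fun a x => by
    have h0 : δ ((algebraMap A B) a) = 0 := h a
    simp [Algebra.smul_def, δ.leibniz, h0, smul_eq_mul, h a]
  map_one_eq_zero' := δ.map_one_eq_zero
  leibniz' := fun a b => δ.leibniz a b

lemma derA_apply (δ : Derivation k B B) (A : Subalgebra k B) (h : ∀ a : A, δ (a : B) = 0)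
    (x : B) : derA δ A h x = δ x := rfl

lemma term_antideriv (δ : Derivation k B B) (z a : B) (ha : δ a = 0) (n : ℕ) :
    ∃ c : B, δ c = a * z ^ n * δ z := by
  refine ⟨algebraMap k B (((n : k) + 1)⁻¹) * (a * z ^ (n + 1)), ?_⟩
  have h1 : ((n : k) + 1) ≠ 0 := Nat.cast_add_one_ne_zero n
  have hpow : δ (z ^ (n + 1)) = ((n : B) + 1) * (z ^ n * δ z) := by
    rw [δ.leibniz_pow, Nat.add_sub_cancel, smul_eq_mul, nsmul_eq_mul]
    push_cast; ring
  have halg : algebraMap k B (((n : k) + 1)⁻¹) * ((n : B) + 1) = 1 := by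
    have h2 : ((n : B) + 1) = algebraMap k B ((n : k) + 1) := by push_cast; ring
    rw [h2, ← map_mul, inv_mul_cancel₀ h1, map_one]
  rw [δ.leibniz, δ.map_algebraMap, δ.leibniz, ha, hpow]
  simp only [smul_eq_mul, mul_zero, zero_mul, add_zero, zero_add, smul_zero]
  calc algebraMap k B (((n:k)+1)⁻¹) * (a * (((n:B)+1) * (z ^ n * δ z)))
      = (algebraMap k B (((n:k)+1)⁻¹) * ((n:B)+1)) * (a * (z ^ n * δ z)) := by ring
    _ = a * z ^ n * δ z := by rw [halg]; ring

lemma sum_antideriv (δ : Derivation k B B) (s : Finset ℕ) (F : ℕ → B)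
    (h : ∀ i ∈ s, ∃ c : B, δ c = F i) : ∃ c : B, δ c = ∑ i ∈ s, F i := by
  classical
  induction s using Finset.induction_on with
  | empty => exact ⟨1, by simp⟩
  | @insert a s' hx ih =>
    obtain ⟨c1, hc1⟩ := h a (Finset.mem_insert_self a s')
    obtain ⟨c2, hc2⟩ := ih fun i hi => h i (Finset.mem_insert_of_mem hi)
    exact ⟨c1 + c2, by rw [map_add, hc1, hc2, Finset.sum_insert hx]⟩

lemma aeval_decomp (A : Subalgebra k B) (z : B) (P : Polynomial A) :
    Polynomial.aeval z P = ↑(P.coeff 0) +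
      ∑ i ∈ Finset.range P.natDegree, (↑(P.coeff (i+1)) : B) * z ^ (i+1) := by
  rw [Polynomial.aeval_eq_sum_range, Finset.sum_range_succ']
  simp only [Algebra.smul_def, pow_zero, mul_one]
  exact add_comm _ _

end helpers

/-- Lemma 3.2(2): with plinth ideal `δ(B) ∩ A = α^p β A` (`α` prime, coprime to
`β`, `p > 0`), `δ z = α^p β`, and `g ∈ I₁ = A[z] ∩ αB` a primitive polynomial over
`A` whose image modulo `α` is nonzero and of minimal degree among the images of
elements of `I₁` (i.e. `ḡ` generates `I₁ ⊗ Frac(A/αA)`), the degree of `ḡ` in `z̄`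
is `> 1`: some coefficient `g.coeff n` with `n > 1` is not divisible by `α`. -/
theorem stmt15 {k B : Type*} [Field k] [CharZero k] [CommRing B] [IsDomain B]
    [UniqueFactorizationMonoid B] [Algebra k B]
    (δ : Derivation k B B) (hln : ∀ b : B, ∃ n : ℕ, (⇑δ)^[n] b = 0)
    (hirr : ∀ b : B, (∀ x : B, b ∣ δ x) → IsUnit b)
    (A : Subalgebra k B) (hA : ∀ b : B, b ∈ A ↔ δ b = 0) (hAfg : A.FG)
    (α β : A) (p : ℕ) (hp : 0 < p) (hαprime : Prime α) (hcop : IsRelPrime α β)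
    (hplinth : ∀ x : B, δ x = 0 →
      ((∃ c : B, δ c = x) ↔ ∃ u : B, δ u = 0 ∧ x = (α : B) ^ p * (β : B) * u))
    (z : B) (hz : δ z = (α : B) ^ p * (β : B))
    (g : Polynomial A) (hgprim : g.IsPrimitive)
    (hgI : ∃ b : B, Polynomial.aeval z g = (α : B) * b)
    (hgne : ∃ n : ℕ, ¬ α ∣ g.coeff n)
    (hgmin : ∀ P : Polynomial A,
      (∃ b : B, Polynomial.aeval z P = (α : B) * b) →
      (∃ n : ℕ, ¬ α ∣ P.coeff n) →
      ∀ n : ℕ, ¬ α ∣ g.coeff n → ∃ m : ℕ, n ≤ m ∧ ¬ α ∣ P.coeff m) :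
    ∃ n : ℕ, 1 < n ∧ ¬ α ∣ g.coeff n := by
  classical
  have key : ∀ a : A, δ (a : B) = 0 := fun a => (hA _).mp a.2
  have hδP : ∀ P : Polynomial A, δ (Polynomial.aeval z P) =
      Polynomial.aeval z (Polynomial.derivative P) * δ z := by
    intro P
    have h := (derA δ A key).map_aeval P z
    rw [smul_eq_mul] at h
    exact h
  have hα0 : α ≠ 0 := hαprime.ne_zero
  have hαB : (α : B) ≠ 0 := fun h => hα0 (by exact_mod_cast h)
  have hβ0 : β ≠ 0 := fun h => hαprime.not_unit (hcop dvd_rfl (by simp [h]))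
  have hβB : (β : B) ≠ 0 := fun h => hβ0 (by exact_mod_cast h)
  have hpow : (α : B) ^ p = (α : B) * (α : B) ^ (p - 1) := by
    obtain ⟨q, rfl⟩ : ∃ q, p = q + 1 := ⟨p - 1, (Nat.succ_pred_eq_of_pos hp).symm⟩
    simp [pow_succ']
  by_contra hcon
  push_neg at hcon
  by_cases h1 : α ∣ g.coeff 1
  · -- case ḡ constant: α divides all coefficients of index ≥ 1
    have hdvd : ∀ n, 1 ≤ n → α ∣ g.coeff n := by
      intro n hn
      rcases eq_or_lt_of_le hn with h | h
      · exact h ▸ h1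
      · exact hcon n h
    obtain ⟨n0, hn0⟩ := hgne
    have hn00 : ¬ α ∣ g.coeff 0 := by
      rcases Nat.eq_zero_or_pos n0 with h | h
      · exact h ▸ hn0
      · exact absurd (hdvd n0 h) hn0
    obtain ⟨b, hb⟩ := hgI
    choose d hd using fun i : ℕ => hdvd (i + 1) (Nat.le_add_left 1 i)
    set S : B := ∑ i ∈ Finset.range g.natDegree, (↑(d i) : B) * z ^ (i + 1) with hS
    have hsum : Polynomial.aeval z g = ↑(g.coeff 0) + (α : B) * S := by
      rw [aeval_decomp, hS, Finset.mul_sum]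
      congr 1
      exact Finset.sum_congr rfl fun i _ => by rw [hd i]; push_cast; ring
    have hc0 : (↑(g.coeff 0) : B) = (α : B) * (b - S) := by
      have := hsum.symm.trans hb
      linear_combination this
    have hδb' : δ (b - S) = 0 := by
      have h0 : (α : B) * δ (b - S) = 0 := by
        have h2 : δ ((α : B) * (b - S)) = 0 := by rw [← hc0]; exact key _
        rw [δ.leibniz, key α, smul_eq_mul, smul_zero, add_zero] at h2
        exact h2
      rcases mul_eq_zero.mp h0 with h | h
      · exact absurd h hαB
      · exact h
    refine absurd ?_ hn00
    refine ⟨⟨b - S, (hA _).mpr hδb'⟩, Subtype.ext ?_⟩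
    push_cast
    exact hc0
  · -- case ḡ of degree 1: derive the plinth contradiction
    obtain ⟨b, hb⟩ := hgI
    have hd0 : (Polynomial.derivative g).coeff 0 = g.coeff 1 := by
      simp [Polynomial.coeff_derivative]
    have hddvd : ∀ i : ℕ, α ∣ (Polynomial.derivative g).coeff (i + 1) := by
      intro i
      rw [Polynomial.coeff_derivative]
      exact (hcon (i + 2) (by omega)).mul_right _
    choose e he using hddvd
    set M := (Polynomial.derivative g).natDegree with hM
    set S : B := ∑ i ∈ Finset.range M, (↑(e i) : B) * z ^ (i + 1) with hS
    have hder : Polynomial.aeval z (Polynomial.derivative g) = ↑(g.coeff 1) + (α : B) * S := by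
      rw [aeval_decomp, hS, Finset.mul_sum, hd0]
      congr 1
      exact Finset.sum_congr rfl fun i _ => by rw [he i]; push_cast; ring
    obtain ⟨c, hc⟩ : ∃ c : B, δ c = S * ((α : B) ^ p * (β : B)) := by
      obtain ⟨c, hc⟩ := sum_antideriv δ (Finset.range M)
        (fun i => (↑(e i) : B) * z ^ (i + 1) * δ z)
        (fun i _ => term_antideriv δ z _ (key (e i)) (i + 1))
      exact ⟨c, by rw [hc, ← Finset.sum_mul, ← hS, hz]⟩
    have h3 : δ (Polynomial.aeval z g) = (α : B) * δ b := by
      rw [hb, δ.leibniz, key α, smul_eq_mul, smul_zero, add_zero]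
    have hmain : (α : B) * δ (b - c) =
        (α : B) * ((↑(g.coeff 1) : B) * (α : B) ^ (p - 1) * (β : B)) := by
      have h2 : δ (Polynomial.aeval z g) =
          ((↑(g.coeff 1) : B) + (α : B) * S) * ((α : B) ^ p * (β : B)) := by
        rw [hδP, hder, hz]
      calc (α : B) * δ (b - c) = (α : B) * δ b - (α : B) * δ c := by rw [map_sub]; ring
        _ = ((↑(g.coeff 1) : B) + (α : B) * S) * ((α : B) ^ p * (β : B))
            - (α : B) * (S * ((α : B) ^ p * (β : B))) := by rw [← h3, h2, hc]
        _ = (↑(g.coeff 1) : B) * ((α : B) ^ p * (β : B)) := by ring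
        _ = (α : B) * ((↑(g.coeff 1) : B) * (α : B) ^ (p - 1) * (β : B)) := by
            rw [hpow]; ring
    set x : A := g.coeff 1 * α ^ (p - 1) * β with hx_def
    have hx : δ (b - c) = (x : B) := by
      have h4 := mul_left_cancel₀ hαB hmain
      rw [h4, hx_def]
      push_cast
      ring
    obtain ⟨u, hu0, hux⟩ := (hplinth (x : B) (key x)).mp ⟨b - c, hx⟩
    obtain ⟨u', hu'⟩ : ∃ u' : A, (u' : B) = u := ⟨⟨u, (hA u).mpr hu0⟩, rfl⟩
    have hcancel : (↑(g.coeff 1) : B) = (α : B) * ↑u' := by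
      have hne : (α : B) ^ (p - 1) * (β : B) ≠ 0 := mul_ne_zero (pow_ne_zero _ hαB) hβB
      apply mul_left_cancel₀ hne
      calc ((α : B) ^ (p - 1) * (β : B)) * (↑(g.coeff 1) : B) = (x : B) := by
            rw [hx_def]; push_cast; ring
        _ = (α : B) ^ p * (β : B) * u := hux
        _ = ((α : B) ^ (p - 1) * (β : B)) * ((α : B) * ↑u') := by rw [hpow, hu']; ring
    exact h1 ⟨u', Subtype.ext (by push_cast; exact hcancel)⟩
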